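/- arXiv:2401.03436 — 2 statements merged into one kernel-verified Lean document; each statement's English description precedes it below -/
import Mathlib

section
/- The set of TS-valid inferences equals the relative sum of the set of LP-valid inferences and the set of K3-valid inferences: 𝕋𝕊⁺ = 𝕃ℙ⁺ † 𝕂₃⁺. That is, an inference Γ ⇒ Δ is TS-valid if and only if for every formula φ, either Γ ⇒ {φ} is LP-valid or {φ} ⇒ Δ is K3-valid. -/
/-- Propositional formulas over a countably infinite set of variables,
with constants ⊤, ⊥, λ and connectives ¬, ∨, ∧. -/
inductive Fm : Type
  | var : ℕ → Fm
  | top : Fm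
  | bot : Fm
  | lam : Fm
  | neg : Fm → Fm
  | disj : Fm → Fm → Fm
  | conj : Fm → Fm → Fm
  deriving DecidableEq

/-- A function `v : Var → ℚ` is an SK-valuation if it takes values in {0, 1/2, 1}. -/
def SK (v : ℕ → ℚ) : Prop := ∀ p : ℕ, v p = 0 ∨ v p = 1/2 ∨ v p = 1

/-- Extension of a valuation to all formulas by the Strong Kleene scheme. -/
def eval (v : ℕ → ℚ) : Fm → ℚ
  | .var p => v p
  | .top => 1
  | .bot => 0
  | .lam => 1/2
  | .neg φ => 1 - eval v φ
  | .disj φ ψ => max (eval v φ) (eval v ψ)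
  | .conj φ ψ => min (eval v φ) (eval v ψ)

/-- An inference is a pair of finite sets of formulas. -/
abbrev Inference := Finset Fm × Finset Fm

def K3Valid (Γ Δ : Finset Fm) : Prop :=
  ∀ v : ℕ → ℚ, SK v → (∀ γ ∈ Γ, eval v γ = 1) → ∃ δ ∈ Δ, eval v δ = 1

def LPValid (Γ Δ : Finset Fm) : Prop :=
  ∀ v : ℕ → ℚ, SK v → (∀ γ ∈ Γ, eval v γ ≠ 0) → ∃ δ ∈ Δ, eval v δ ≠ 0

def STValid (Γ Δ : Finset Fm) : Prop :=
  ∀ v : ℕ → ℚ, SK v → (∀ γ ∈ Γ, eval v γ = 1) → ∃ δ ∈ Δ, eval v δ ≠ 0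

def TSValid (Γ Δ : Finset Fm) : Prop :=
  ∀ v : ℕ → ℚ, SK v → (∀ γ ∈ Γ, eval v γ ≠ 0) → ∃ δ ∈ Δ, eval v δ = 1

def K3plus : Set Inference := {I | K3Valid I.1 I.2}
def LPplus : Set Inference := {I | LPValid I.1 I.2}
def STplus : Set Inference := {I | STValid I.1 I.2}
def TSplus : Set Inference := {I | TSValid I.1 I.2}

/-- Relative product: the middle term is a single formula. -/
def RelProd (R S : Set Inference) : Set Inference :=
  {I | ∃ φ : Fm, (I.1, ({φ} : Finset Fm)) ∈ R ∧ (({φ} : Finset Fm), I.2) ∈ S}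

/-- Relative sum: for every single formula, one of the two components holds. -/
def RelSum (R S : Set Inference) : Set Inference :=
  {I | ∀ φ : Fm, (I.1, ({φ} : Finset Fm)) ∈ R ∨ (({φ} : Finset Fm), I.2) ∈ S}


def vars : Fm → Finset ℕ
  | .var p => {p}
  | .top => ∅
  | .bot => ∅
  | .lam => ∅
  | .neg φ => vars φ
  | .disj φ ψ => vars φ ∪ vars ψ
  | .conj φ ψ => vars φ ∪ vars ψ

lemma eval_congr (v w : ℕ → ℚ) (φ : Fm) (h : ∀ p ∈ vars φ, v p = w p) :
    eval v φ = eval w φ := by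
  induction φ with
  | var p => exact h p (by simp [vars])
  | top => rfl
  | bot => rfl
  | lam => rfl
  | neg φ ih => simp only [eval]; rw [ih (fun p hp => h p (by simpa [vars] using hp))]
  | disj φ ψ ih1 ih2 =>
      simp only [eval]
      rw [ih1 (fun p hp => h p (by simp [vars]; exact Or.inl hp)),
          ih2 (fun p hp => h p (by simp [vars]; exact Or.inr hp))]
  | conj φ ψ ih1 ih2 =>
      simp only [eval]
      rw [ih1 (fun p hp => h p (by simp [vars]; exact Or.inl hp)),
          ih2 (fun p hp => h p (by simp [vars]; exact Or.inr hp))]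

lemma eval_vals {v : ℕ → ℚ} (hv : SK v) (φ : Fm) :
    eval v φ = 0 ∨ eval v φ = 1/2 ∨ eval v φ = 1 := by
  induction φ with
  | var p => exact hv p
  | top => simp [eval]
  | bot => simp [eval]
  | lam => simp [eval]
  | neg φ ih => rcases ih with h | h | h <;> simp [eval, h] <;> norm_num
  | disj φ ψ ih1 ih2 =>
      rcases ih1 with h1 | h1 | h1 <;> rcases ih2 with h2 | h2 | h2 <;>
        simp [eval, h1, h2] <;> norm_num
  | conj φ ψ ih1 ih2 =>
      rcases ih1 with h1 | h1 | h1 <;> rcases ih2 with h2 | h2 | h2 <;>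
        simp [eval, h1, h2] <;> norm_num

lemma info_mono {u v : ℕ → ℚ} (hu : SK u) (hv : SK v)
    (h : ∀ p, u p = v p ∨ u p = 1/2) (φ : Fm) :
    eval u φ = eval v φ ∨ eval u φ = 1/2 := by
  induction φ with
  | var p => exact h p
  | top => left; rfl
  | bot => left; rfl
  | lam => left; rfl
  | neg φ ih =>
      rcases ih with h1 | h1 <;> simp [eval, h1] <;> norm_num
  | disj φ ψ ih1 ih2 =>
      have e1 := eval_vals hv φ
      have e2 := eval_vals hv ψ
      rcases ih1 with h1 | h1 <;> rcases ih2 with h2 | h2 <;>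
        rcases e1 with e1 | e1 | e1 <;> rcases e2 with e2 | e2 | e2 <;>
          simp [eval, h1, h2, e1, e2] <;> norm_num
  | conj φ ψ ih1 ih2 =>
      have e1 := eval_vals hv φ
      have e2 := eval_vals hv ψ
      rcases ih1 with h1 | h1 <;> rcases ih2 with h2 | h2 <;>
        rcases e1 with e1 | e1 | e1 <;> rcases e2 with e2 | e2 | e2 <;>
          simp [eval, h1, h2, e1, e2] <;> norm_num

theorem TS_eq_relSum_LP_K3 : TSplus = RelSum LPplus K3plus := by
  ext ⟨Γ, Δ⟩
  simp only [TSplus, RelSum, LPplus, K3plus, Set.mem_setOf_eq]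
  constructor
  · intro hTS φ
    by_cases hex : ∃ v : ℕ → ℚ, SK v ∧ (∀ γ ∈ Γ, eval v γ ≠ 0) ∧ eval v φ = 0
    · right
      obtain ⟨v, hv, hprem, _⟩ := hex
      intro w hw _
      set u : ℕ → ℚ := fun p => if v p = w p then v p else 1/2 with hudef
      have hu : SK u := by
        intro p
        by_cases hc : v p = w p <;> simp [hudef, hc]
        · simpa [hc] using hv p
      have huv : ∀ p, u p = v p ∨ u p = 1/2 := by
        intro p; by_cases hc : v p = w p <;> simp [hudef, hc]
      have huw : ∀ p, u p = w p ∨ u p = 1/2 := by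
        intro p; by_cases hc : v p = w p <;> simp [hudef, hc]
      have hprem' : ∀ γ ∈ Γ, eval u γ ≠ 0 := by
        intro γ hγ h0
        rcases info_mono hu hv huv γ with h | h
        · exact hprem γ hγ (h ▸ h0)
        · rw [h0] at h; norm_num at h
      obtain ⟨δ, hδ, hδ1⟩ := hTS u hu hprem'
      refine ⟨δ, hδ, ?_⟩
      rcases info_mono hu hw huw δ with h | h
      · rw [← h, hδ1]
      · rw [hδ1] at h; norm_num at h
    · left
      push_neg at hex
      intro w hw hprem
      exact ⟨φ, Finset.mem_singleton_self φ, hex w hw hprem⟩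
  · intro h v hv hprem
    set V : Finset ℕ := Γ.biUnion vars ∪ Δ.biUnion vars with hVdef
    set q : ℕ := V.sup id + 1 with hqdef
    have hqV : q ∉ V := by
      intro hq
      have := Finset.le_sup (f := id) hq
      simp only [id] at this
      omega
    have hfresh : ∀ ψ : Fm, ψ ∈ Γ ∪ Δ → q ∉ vars ψ := by
      intro ψ hψ hq
      apply hqV
      rcases Finset.mem_union.mp hψ with h1 | h1
      · exact Finset.mem_union_left _ (Finset.mem_biUnion.mpr ⟨ψ, h1, hq⟩)
      · exact Finset.mem_union_right _ (Finset.mem_biUnion.mpr ⟨ψ, h1, hq⟩)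
    rcases h (Fm.var q) with hLP | hK3
    · exfalso
      set u : ℕ → ℚ := Function.update v q 0 with hudef
      have hu : SK u := by
        intro p
        by_cases hc : p = q <;> simp [hudef, hc, Function.update]
        · simpa using hv p
      have hprem' : ∀ γ ∈ Γ, eval u γ ≠ 0 := by
        intro γ hγ
        have : eval u γ = eval v γ := by
          apply eval_congr
          intro p hp
          have : p ≠ q := by
            intro he; exact hfresh γ (Finset.mem_union_left _ hγ) (he ▸ hp)
          simp [hudef, Function.update, this]
        rw [this]; exact hprem γ hγ
      obtain ⟨δ, hδ, hδ0⟩ := hLP u hu hprem'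
      rw [Finset.mem_singleton] at hδ
      subst hδ
      apply hδ0
      simp [eval, hudef, Function.update]
    · set u : ℕ → ℚ := Function.update v q 1 with hudef
      have hu : SK u := by
        intro p
        by_cases hc : p = q <;> simp [hudef, hc, Function.update]
        · simpa using hv p
      have hq1 : ∀ γ ∈ ({Fm.var q} : Finset Fm), eval u γ = 1 := by
        intro γ hγ
        rw [Finset.mem_singleton] at hγ
        subst hγ
        simp [eval, hudef, Function.update]
      obtain ⟨δ, hδ, hδ1⟩ := hK3 u hu hq1
      refine ⟨δ, hδ, ?_⟩
      rw [← hδ1]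
      apply eval_congr
      intro p hp
      have : p ≠ q := by
        intro he; exact hfresh δ (Finset.mem_union_right _ hδ) (he ▸ hp)
      simp [hudef, Function.update, this]
end

section
/- ST and TS are operationally self-dual: for all finite sets of formulas Γ, Δ, the inference Γ ⇒ Δ is ST-valid if and only if ∼(Δ) ⇒ ∼(Γ) is ST-valid, and Γ ⇒ Δ is TS-valid if and only if ∼(Δ) ⇒ ∼(Γ) is TS-valid. -/
/-- The operational-dual map `∼`, interchanging ⊤ with ⊥ and ∧ with ∨. -/
def opDual : Fm → Fm
  | .var p => .var p
  | .top => .bot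
  | .bot => .top
  | .lam => .lam
  | .neg φ => .neg (opDual φ)
  | .conj φ ψ => .disj (opDual φ) (opDual ψ)
  | .disj φ ψ => .conj (opDual φ) (opDual ψ)


lemma opDual_opDual (φ : Fm) : opDual (opDual φ) = φ := by
  induction φ <;> simp [opDual, *]

lemma eval_opDual (v : ℕ → ℚ) (φ : Fm) :
    eval (fun p => 1 - v p) (opDual φ) = 1 - eval v φ := by
  induction φ with
  | var p => simp [opDual, eval]
  | top => simp [opDual, eval]
  | bot => simp [opDual, eval]
  | lam => norm_num [opDual, eval]
  | neg φ ih => simp [opDual, eval, ih]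
  | disj φ ψ ih1 ih2 =>
      simp only [opDual, eval, ih1, ih2]
      rcases le_total (eval v φ) (eval v ψ) with h | h
      · rw [min_eq_right (by linarith), max_eq_right h]
      · rw [min_eq_left (by linarith), max_eq_left h]
  | conj φ ψ ih1 ih2 =>
      simp only [opDual, eval, ih1, ih2]
      rcases le_total (eval v φ) (eval v ψ) with h | h
      · rw [max_eq_left (by linarith), min_eq_left h]
      · rw [max_eq_right (by linarith), min_eq_right h]

lemma SK_flip {v : ℕ → ℚ} (hv : SK v) : SK (fun p => 1 - v p) := by
  intro p
  rcases hv p with h | h | h <;> simp [h] <;> norm_num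

lemma ST_dual_mp {Γ Δ : Finset Fm} (h : STValid Γ Δ) :
    STValid (Δ.image opDual) (Γ.image opDual) := by
  intro v hv hprem
  set w := fun p => 1 - v p with hw
  have hwv : ∀ p, 1 - w p = v p := fun p => by simp [hw]
  have key : ∀ φ : Fm, eval v (opDual φ) = 1 - eval w φ := by
    intro φ
    have hfun : (fun p => 1 - w p) = v := funext hwv
    rw [← hfun]
    exact eval_opDual w φ
  have hΔ : ∀ δ ∈ Δ, eval w δ = 0 := by
    intro δ hδ
    have := hprem (opDual δ) (Finset.mem_image_of_mem _ hδ)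
    rw [key δ] at this; linarith
  by_contra hcon
  push_neg at hcon
  have hΓ : ∀ γ ∈ Γ, eval w γ = 1 := by
    intro γ hγ
    have := hcon (opDual γ) (Finset.mem_image_of_mem _ hγ)
    rw [key γ] at this; linarith
  obtain ⟨δ, hδ, hne⟩ := h w (SK_flip hv) hΓ
  exact hne (hΔ δ hδ)

lemma TS_dual_mp {Γ Δ : Finset Fm} (h : TSValid Γ Δ) :
    TSValid (Δ.image opDual) (Γ.image opDual) := by
  intro v hv hprem
  set w := fun p => 1 - v p with hw
  have hwv : ∀ p, 1 - w p = v p := fun p => by simp [hw]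
  have key : ∀ φ : Fm, eval v (opDual φ) = 1 - eval w φ := by
    intro φ
    have hfun : (fun p => 1 - w p) = v := funext hwv
    rw [← hfun]
    exact eval_opDual w φ
  have hΔ : ∀ δ ∈ Δ, eval w δ ≠ 1 := by
    intro δ hδ
    have := hprem (opDual δ) (Finset.mem_image_of_mem _ hδ)
    rw [key δ] at this
    intro h1; exact this (by rw [h1]; ring)
  by_contra hcon
  push_neg at hcon
  have hΓ : ∀ γ ∈ Γ, eval w γ ≠ 0 := by
    intro γ hγ h0
    have := hcon (opDual γ) (Finset.mem_image_of_mem _ hγ)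
    rw [key γ, h0] at this
    exact this (by ring)
  obtain ⟨δ, hδ, h1⟩ := h w (SK_flip hv) hΓ
  exact hΔ δ hδ h1

lemma image_opDual_opDual (Γ : Finset Fm) :
    (Γ.image opDual).image opDual = Γ := by
  rw [Finset.image_image]
  have : (opDual ∘ opDual) = id := funext opDual_opDual
  rw [this, Finset.image_id]

theorem ST_TS_operationally_self_dual (Γ Δ : Finset Fm) :
    (STValid Γ Δ ↔ STValid (Δ.image opDual) (Γ.image opDual)) ∧
    (TSValid Γ Δ ↔ TSValid (Δ.image opDual) (Γ.image opDual)) := by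
  constructor
  · exact ⟨ST_dual_mp, fun h => by
      have := ST_dual_mp h
      rwa [image_opDual_opDual, image_opDual_opDual] at this⟩
  · exact ⟨TS_dual_mp, fun h => by
      have := TS_dual_mp h
      rwa [image_opDual_opDual, image_opDual_opDual] at this⟩
end
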